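/- Let B ⊆ Z_{≥0}^{m_1+...+m_n} be a finite nonempty set of vectors of equal modulus satisfying the generalized bi-exchange property. Then the downset P* = {b ∈ Z_{≥0}^{m_1+...+m_n} : b ≤ a for some a ∈ B} is a generalized discrete bi-polymatroid whose set of bases is exactly B. -/

import Mathlib

open Finset

/-- Index set: pairs (i,j) with 1 ≤ i ≤ n, 1 ≤ j ≤ m i. -/
abbrev Idx (n : ℕ) (m : Fin n → ℕ) := (i : Fin n) × Fin (m i)

/-- The vector a − e_{ij} + e_{il}. -/
def exchStep {n : ℕ} {m : Fin n → ℕ} (a : Idx n m → ℕ) (i : Fin n) (j l : Fin (m i)) :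
    Idx n m → ℕ :=
  fun p => if p = ⟨i, j⟩ then a p - 1 else if p = ⟨i, l⟩ then a p + 1 else a p

/-- The generalized bi-exchange property. -/
def BiExchange {n : ℕ} {m : Fin n → ℕ} (B : Set (Idx n m → ℕ)) : Prop :=
  ∀ a ∈ B, ∀ b ∈ B, ∀ (i : Fin n) (j : Fin (m i)),
    b ⟨i, j⟩ < a ⟨i, j⟩ →
      ∃ l : Fin (m i), a ⟨i, l⟩ < b ⟨i, l⟩ ∧ exchStep a i j l ∈ B

/-- A generalized discrete bi-polymatroid: (D1) closed under integral subvectors and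
(D2) the augmentation axiom. -/
def IsGDBP {n : ℕ} {m : Fin n → ℕ} (P : Set (Idx n m → ℕ)) : Prop :=
  (∀ a ∈ P, ∀ b : Idx n m → ℕ, b ≤ a → b ∈ P) ∧
  (∀ a ∈ P, ∀ b ∈ P, (∑ p, a p) < (∑ p, b p) →
    ∃ u ∈ P, a < u ∧ u ≤ a ⊔ b)

/-- The set of bases (maximal elements) of P. -/
def basesOf {n : ℕ} {m : Fin n → ℕ} (P : Set (Idx n m → ℕ)) : Set (Idx n m → ℕ) :=
  {a ∈ P | ∀ b ∈ P, ¬ a < b}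

lemma sum_tsub_min {α : Type*} [Fintype α] (f g : α → ℕ) :
    (∑ p, f p) = (∑ p, (f p - g p)) + ∑ p, min (f p) (g p) := by
  rw [← Finset.sum_add_distrib]
  exact Finset.sum_congr rfl (fun p _ => by omega)

/-- the downset of a finite nonempty equal-modulus set satisfying the
generalized bi-exchange property is a generalized discrete bi-polymatroid whose set of
bases is exactly B. -/
theorem stmt19 {n : ℕ} {m : Fin n → ℕ} (B : Set (Idx n m → ℕ)) (t : ℕ)
    (hne : B.Nonempty) (hfin : B.Finite)
    (hmod : ∀ a ∈ B, (∑ p, a p) = t) (hex : BiExchange B) :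
    IsGDBP {b : Idx n m → ℕ | ∃ a ∈ B, b ≤ a} ∧
      basesOf {b : Idx n m → ℕ | ∃ a ∈ B, b ≤ a} = B := by
  classical
  constructor
  · constructor
    · rintro a ⟨a', ha', haa'⟩ b hba
      exact ⟨a', ha', le_trans hba haa'⟩
    · rintro a ⟨a₀, ha₀, haa₀⟩ b ⟨b', hb', hbb'⟩ hlt
      have hSfin : {c ∈ B | a ≤ c}.Finite := hfin.subset (fun x hx => hx.1)
      have hSne : {c ∈ B | a ≤ c}.Nonempty := ⟨a₀, ha₀, haa₀⟩
      obtain ⟨a', ⟨ha'B, haa'⟩, hmin⟩ :=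
        Set.exists_min_image _ (fun c => ∑ p, (c p - b' p)) hSfin hSne
      by_cases hgood : ∃ q, a q < b q ∧ a q < a' q
      · obtain ⟨q, h1, h2⟩ := hgood
        refine ⟨Function.update a q (a q + 1), ⟨a', ha'B, ?_⟩, ?_, ?_⟩
        · intro p
          by_cases hpq : p = q
          · subst hpq; rw [Function.update_self]; exact h2
          · rw [Function.update_of_ne hpq]; exact haa' p
        · refine lt_of_le_of_ne (fun p => ?_) (fun h => ?_)
          · by_cases hpq : p = q
            · subst hpq; rw [Function.update_self]; exact Nat.le_succ _
            · rw [Function.update_of_ne hpq]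
          · have h3 := congrFun h q
            rw [Function.update_self] at h3
            omega
        · intro p
          by_cases hpq : p = q
          · subst hpq; rw [Function.update_self, Pi.sup_apply]
            exact le_trans h1 (le_max_right _ _)
          · rw [Function.update_of_ne hpq, Pi.sup_apply]
            exact le_max_left _ _
      · push_neg at hgood
        exfalso
        have F1 : ∀ q, a q < b q → a' q = a q :=
          fun q hq => le_antisymm (hgood q hq) (haa' q)
        have F2 : ∀ p, b' p < a' p → a p = a' p := by
          rintro ⟨i, j⟩ hp
          by_contra hne'
          have hlt2 : a ⟨i, j⟩ < a' ⟨i, j⟩ := lt_of_le_of_ne (haa' _) hne'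
          obtain ⟨l, hl1, hl2⟩ := hex a' ha'B b' hb' i j hp
          have hjl : (⟨i, j⟩ : Idx n m) ≠ ⟨i, l⟩ := by
            intro h; rw [h] at hp; omega
          have hlj : l ≠ j := by
            intro h; subst h; omega
          have e1 : exchStep a' i j l ⟨i, j⟩ = a' ⟨i, j⟩ - 1 := by
            simp [exchStep]
          have e2 : exchStep a' i j l ⟨i, l⟩ = a' ⟨i, l⟩ + 1 := by
            simp [exchStep, hlj]
          have e3 : ∀ p, p ≠ ⟨i, j⟩ → p ≠ ⟨i, l⟩ → exchStep a' i j l p = a' p := by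
            intro p h1 h2; simp [exchStep, h1, h2]
          have hle : a ≤ exchStep a' i j l := by
            intro p
            by_cases hp1 : p = ⟨i, j⟩
            · subst hp1; rw [e1]
              have h7 : a ⟨i, j⟩ ≤ a' ⟨i, j⟩ - 1 := by omega
              exact h7
            · by_cases hp2 : p = ⟨i, l⟩
              · subst hp2; rw [e2]; exact le_trans (haa' _) (Nat.le_succ _)
              · rw [e3 p hp1 hp2]; exact haa' p
          have hΦlt : (∑ p, (exchStep a' i j l p - b' p)) < ∑ p, (a' p - b' p) := by
            apply Finset.sum_lt_sum
            · intro p _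
              by_cases hp1 : p = ⟨i, j⟩
              · subst hp1; rw [e1]
                have h7 : a' ⟨i, j⟩ - 1 - b' ⟨i, j⟩ ≤ a' ⟨i, j⟩ - b' ⟨i, j⟩ := by omega
                exact h7
              · by_cases hp2 : p = ⟨i, l⟩
                · subst hp2; rw [e2]
                  have h7 : a' ⟨i, l⟩ + 1 - b' ⟨i, l⟩ ≤ a' ⟨i, l⟩ - b' ⟨i, l⟩ := by omega
                  exact h7
                · rw [e3 p hp1 hp2]
            · refine ⟨⟨i, j⟩, Finset.mem_univ _, ?_⟩
              rw [e1]
              have h7 : a' ⟨i, j⟩ - 1 - b' ⟨i, j⟩ < a' ⟨i, j⟩ - b' ⟨i, j⟩ := by omega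
              exact h7
          have h9 := hmin (exchStep a' i j l) ⟨hl2, hle⟩
          omega
        have e1 : (∑ p, (b p - a p)) ≤ ∑ p, (b' p - a' p) := by
          apply Finset.sum_le_sum
          intro p _
          rcases lt_or_ge (a p) (b p) with h | h
          · have h4 : a p < b p := h
            have h5 := F1 p h
            have h6 : b p ≤ b' p := hbb' p
            have h7 : b p - a p ≤ b' p - a' p := by omega
            exact h7
          · have h4 : b p ≤ a p := h
            have h7 : b p - a p ≤ b' p - a' p := by omega
            exact h7
        have e2 : (∑ p, (a' p - b' p)) ≤ ∑ p, (a p - b p) := by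
          apply Finset.sum_le_sum
          intro p _
          rcases lt_or_ge (b' p) (a' p) with h | h
          · have h4 : b' p < a' p := h
            have h5 := F2 p h
            have h6 : b p ≤ b' p := hbb' p
            have h7 : a' p - b' p ≤ a p - b p := by omega
            exact h7
          · have h4 : a' p ≤ b' p := h
            have h7 : a' p - b' p ≤ a p - b p := by omega
            exact h7
        have k1 := sum_tsub_min b' a'
        have k2 := sum_tsub_min a' b'
        have k3 := sum_tsub_min b a
        have k4 := sum_tsub_min a b
        have hminsym : (∑ p, min (b' p) (a' p)) = ∑ p, min (a' p) (b' p) :=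
          Finset.sum_congr rfl (fun p _ => min_comm _ _)
        have hminsym2 : (∑ p, min (b p) (a p)) = ∑ p, min (a p) (b p) :=
          Finset.sum_congr rfl (fun p _ => min_comm _ _)
        have ht1 := hmod a' ha'B
        have ht2 := hmod b' hb'
        omega
  · ext c
    constructor
    · rintro ⟨⟨d, hd, hcd⟩, hmax⟩
      have hcd' : c = d := by
        by_contra hne'
        exact hmax d ⟨d, hd, le_refl d⟩ (lt_of_le_of_ne hcd hne')
      rwa [hcd']
    · intro hc
      refine ⟨⟨c, hc, le_refl c⟩, ?_⟩
      rintro d ⟨d', hd', hdd'⟩ hcd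
      have h1 : (∑ p, c p) < ∑ p, d p := by
        obtain ⟨hle, p, hp⟩ := Pi.lt_def.mp hcd
        exact Finset.sum_lt_sum (fun p _ => hle p) ⟨p, Finset.mem_univ p, hp⟩
      have h2 : (∑ p, d p) ≤ ∑ p, d' p := Finset.sum_le_sum fun p _ => hdd' p
      have h3 := hmod c hc
      have h4 := hmod d' hd'
      omega
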